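/- Let A be a unital C*-algebra, let a ∈ A be star-normal with spectrum σ(a) contained in the closed disc {z ∈ ℂ : |z − 1| ≤ 1}, and let α ∈ ℂ with Re α > 0. Let f : ℂ → ℂ be defined by f(z) = z^α (principal power) for z ≠ 0 and f(0) = 0; f is continuous on the closed disc since Re α > 0. Then the series ∑_{n=0}^∞ (∑_{k=0}^n P_k(n)·a^k)·P_n(α) (whose inner sum equals (1−a)^n, so the series is ∑_{n=0}^∞ binom(α,n)·(a−1)^n) converges in norm, and its sum equals cfc(f, a). -/

import Mathlib

open Filter Finset Topology

/-- The `n`-th Pochhammer–Newton polynomial `P_n(α) = ((-1)^n / n!) ∏_{m=0}^{n-1} (α - m)`. -/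
noncomputable def pochNewton (n : ℕ) (α : ℂ) : ℂ :=
  ((-1 : ℂ) ^ n / (n.factorial : ℂ)) * ∏ m ∈ Finset.range n, (α - (m : ℂ))

/-- The generalized binomial coefficient `binom(α, n)`. -/
noncomputable def binomCoef (α : ℂ) (n : ℕ) : ℂ :=
  (∏ m ∈ Finset.range n, (α - (m : ℂ))) / (n.factorial : ℂ)

lemma re_pos_of_mem_ball {w : ℂ} (hw : w ∈ Metric.ball (1 : ℂ) 1) : 0 < w.re := by
  rw [Metric.mem_ball, dist_eq_norm] at hw
  have h2 : ‖w - 1‖ ^ 2 < 1 := by nlinarith [norm_nonneg (w - 1)]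
  rw [Complex.sq_norm, Complex.normSq_apply] at h2
  simp only [Complex.sub_re, Complex.sub_im, Complex.one_re, Complex.one_im] at h2
  nlinarith [sq_nonneg w.im]

lemma re_nonneg_of_mem_closedBall {w : ℂ} (hw : w ∈ Metric.closedBall (1 : ℂ) 1) : 0 ≤ w.re := by
  rw [Metric.mem_closedBall, dist_eq_norm] at hw
  have h2 : ‖w - 1‖ ^ 2 ≤ 1 := by nlinarith [norm_nonneg (w - 1)]
  rw [Complex.sq_norm, Complex.normSq_apply] at h2
  simp only [Complex.sub_re, Complex.sub_im, Complex.one_re, Complex.one_im] at h2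
  nlinarith [sq_nonneg w.im, sq_nonneg w.re]

lemma iteratedDeriv_cpow (α : ℂ) (n : ℕ) :
    ∀ z : ℂ, 0 < z.re → iteratedDeriv n (fun w : ℂ => w ^ α) z
      = (∏ m ∈ Finset.range n, (α - (m : ℂ))) * z ^ (α - n) := by
  induction n with
  | zero => intro z hz; simp
  | succ n ih =>
    intro z hz
    rw [iteratedDeriv_succ]
    have hev : iteratedDeriv n (fun w : ℂ => w ^ α) =ᶠ[nhds z]
        fun w => (∏ m ∈ Finset.range n, (α - (m : ℂ))) * w ^ (α - n) := by
      filter_upwards [(isOpen_lt continuous_const Complex.continuous_re).mem_nhds hz] with w hw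
      exact ih w hw
    rw [hev.deriv_eq]
    have hd : HasDerivAt (fun w : ℂ => (∏ m ∈ Finset.range n, (α - (m : ℂ))) * w ^ (α - n))
        ((∏ m ∈ Finset.range n, (α - (m : ℂ))) * ((α - n) * z ^ (α - n - 1))) z :=
      ((Complex.hasStrictDerivAt_cpow_const (Or.inl hz)).hasDerivAt).const_mul _
    rw [hd.deriv, Finset.prod_range_succ]
    have he : α - ((n : ℂ) + 1) = α - n - 1 := by ring
    push_cast
    rw [he]
    ring

lemma hasSum_binomial (α : ℂ) {z : ℂ} (hz : z ∈ Metric.ball (1 : ℂ) 1) :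
    HasSum (fun n : ℕ => binomCoef α n * (z - 1) ^ n) (z ^ α) := by
  have hdiff : DifferentiableOn ℂ (fun w : ℂ => w ^ α) (Metric.ball (1 : ℂ) 1) := fun w hw =>
    ((Complex.hasStrictDerivAt_cpow_const (Or.inl (re_pos_of_mem_ball hw))).hasDerivAt
      ).differentiableAt.differentiableWithinAt
  have H := Complex.hasSum_taylorSeries_on_ball hdiff hz
  have hfeq : (fun n : ℕ => binomCoef α n * (z - 1) ^ n) = fun n : ℕ =>
      ((n.factorial : ℂ))⁻¹ • (z - 1) ^ n • iteratedDeriv n (fun w : ℂ => w ^ α) 1 := by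
    funext n
    rw [iteratedDeriv_cpow α n 1 (by norm_num), Complex.one_cpow]
    simp only [binomCoef, smul_eq_mul, mul_one]
    ring
  rw [hfeq]; exact H

lemma binomCoef_succ (α : ℂ) (n : ℕ) :
    binomCoef α (n + 1) = binomCoef α n * ((α - n) / (n + 1)) := by
  rw [binomCoef, binomCoef, div_mul_div_comm, Finset.prod_range_succ]
  congr 1
  push_cast [Nat.factorial_succ]
  ring

lemma summable_binomCoef {α : ℂ} (hα : 0 < α.re) :
    Summable (fun n : ℕ => ‖binomCoef α n‖) := by
  set r : ℝ := α.re with hr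
  set t : ℝ := α.im with ht
  set p : ℝ := r / 2 with hp
  set q : ℝ := 1 + p with hq
  have hp0 : 0 < p := by positivity
  have hq1 : 1 ≤ q := by simp only [hq]; linarith
  obtain ⟨N₀, hN₀⟩ := exists_nat_ge (1 + r + t ^ 2 / r)
  have hN₀1 : (1 : ℝ) ≤ N₀ := by
    refine le_trans ?_ hN₀
    have : 0 ≤ t ^ 2 / r := by positivity
    linarith
  have hcore : ∀ n : ℕ, N₀ ≤ n → ‖α - (n : ℂ)‖ ≤ (n : ℝ) - p := by
    intro n hn
    have hn' : (N₀ : ℝ) ≤ (n : ℝ) := by exact_mod_cast hn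
    have hnr : (1 : ℝ) + r + t ^ 2 / r ≤ n := le_trans hN₀ hn'
    have hsq : ‖α - (n : ℂ)‖ ^ 2 = (r - n) ^ 2 + t ^ 2 := by
      rw [Complex.sq_norm, Complex.normSq_apply]
      simp only [Complex.sub_re, Complex.sub_im, Complex.natCast_re, Complex.natCast_im,
        sub_zero, ← hr, ← ht]
      ring
    have ht2 : t ^ 2 ≤ r * ((n : ℝ) - 1 - r) := by
      have hrn : t ^ 2 / r ≤ (n : ℝ) - 1 - r := by linarith
      have := (div_le_iff₀ hα).mp hrn
      linarith [this]
    have hnp : 0 ≤ (n : ℝ) - p := by nlinarith [sq_nonneg t]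
    have hkey : ‖α - (n : ℂ)‖ ^ 2 ≤ ((n : ℝ) - p) ^ 2 := by
      rw [hsq]; nlinarith [sq_nonneg t]
    calc ‖α - (n : ℂ)‖ = Real.sqrt (‖α - (n : ℂ)‖ ^ 2) := by rw [Real.sqrt_sq (norm_nonneg _)]
      _ ≤ Real.sqrt (((n : ℝ) - p) ^ 2) := Real.sqrt_le_sqrt hkey
      _ = (n : ℝ) - p := Real.sqrt_sq hnp
  have hstep : ∀ n : ℕ, N₀ ≤ n →
      ‖binomCoef α (n + 1)‖ * ((n : ℝ) + 1) ^ q ≤ ‖binomCoef α n‖ * (n : ℝ) ^ q := by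
    intro n hn
    have hn1 : (1 : ℝ) ≤ (n : ℝ) := le_trans hN₀1 (by exact_mod_cast hn)
    have hnpos : (0 : ℝ) < n := by linarith
    have hn1pos : (0 : ℝ) < (n : ℝ) + 1 := by linarith
    have hb : 1 - q * (1 / ((n : ℝ) + 1)) ≤ (1 - 1 / ((n : ℝ) + 1)) ^ q := by
      have h := one_add_mul_self_le_rpow_one_add
        (s := -(1 / ((n : ℝ) + 1))) (by
          have h1 : 1 / ((n : ℝ) + 1) ≤ 1 := by
            rw [div_le_one hn1pos]; linarith
          linarith) hq1
      have he1 : (1 : ℝ) + -(1 / ((n : ℝ) + 1)) = 1 - 1 / ((n : ℝ) + 1) := by ring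
      rw [he1] at h
      calc 1 - q * (1 / ((n : ℝ) + 1)) = 1 + q * -(1 / ((n : ℝ) + 1)) := by ring
        _ ≤ _ := h
    have hdivq : ((n : ℝ) / ((n : ℝ) + 1)) ^ q = (n : ℝ) ^ q / ((n : ℝ) + 1) ^ q :=
      Real.div_rpow hnpos.le hn1pos.le q
    have hnd : (n : ℝ) / ((n : ℝ) + 1) = 1 - 1 / ((n : ℝ) + 1) := by field_simp; ring
    have hkey : (((n : ℝ) - p) / ((n : ℝ) + 1)) ≤ (n : ℝ) ^ q / ((n : ℝ) + 1) ^ q := by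
      rw [← hdivq, hnd]
      refine le_trans (le_of_eq ?_) hb
      rw [hq]
      field_simp
      ring
    have hnorm : ‖binomCoef α (n + 1)‖ = ‖binomCoef α n‖ * (‖α - (n : ℂ)‖ / ((n : ℝ) + 1)) := by
      rw [binomCoef_succ, norm_mul, norm_div]
      congr 2
      have : ((n : ℂ) + 1) = ((n + 1 : ℕ) : ℂ) := by push_cast; ring
      rw [this, Complex.norm_natCast]
      push_cast; ring
    rw [hnorm, mul_assoc]
    refine mul_le_mul_of_nonneg_left ?_ (norm_nonneg _)
    have h1 : ‖α - (n : ℂ)‖ / ((n : ℝ) + 1) ≤ ((n : ℝ) - p) / ((n : ℝ) + 1) := by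
      gcongr
      exact hcore n hn
    have h2 : ‖α - (n : ℂ)‖ / ((n : ℝ) + 1) * ((n : ℝ) + 1) ^ q
        ≤ (n : ℝ) ^ q / ((n : ℝ) + 1) ^ q * ((n : ℝ) + 1) ^ q :=
      mul_le_mul_of_nonneg_right (le_trans h1 hkey) (Real.rpow_nonneg hn1pos.le _)
    refine le_trans h2 (le_of_eq ?_)
    rw [div_mul_cancel₀]
    exact ne_of_gt (Real.rpow_pos_of_pos hn1pos _)
  set u : ℕ → ℝ := fun n => ‖binomCoef α n‖ * (n : ℝ) ^ q with hu
  have hmono : ∀ k : ℕ, u (N₀ + k) ≤ u N₀ := by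
    intro k
    induction k with
    | zero => simp
    | succ k ih =>
      refine le_trans ?_ ih
      have h := hstep (N₀ + k) (Nat.le_add_right _ _)
      simp only [hu]
      rw [show N₀ + (k + 1) = (N₀ + k) + 1 from rfl]
      calc ‖binomCoef α ((N₀ + k) + 1)‖ * (((N₀ + k) + 1 : ℕ) : ℝ) ^ q
          = ‖binomCoef α ((N₀ + k) + 1)‖ * (((N₀ + k : ℕ) : ℝ) + 1) ^ q := by push_cast; ring_nf
        _ ≤ ‖binomCoef α (N₀ + k)‖ * ((N₀ + k : ℕ) : ℝ) ^ q := h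
  have hbound : ∀ n : ℕ, ‖binomCoef α (n + N₀)‖ ≤ u N₀ * ((n + N₀ : ℕ) : ℝ) ^ (-q) := by
    intro n
    have hmpos : (0 : ℝ) < ((n + N₀ : ℕ) : ℝ) := by
      have : (1 : ℝ) ≤ ((N₀ : ℕ) : ℝ) := hN₀1
      push_cast
      linarith
    have hqpos : (0 : ℝ) < ((n + N₀ : ℕ) : ℝ) ^ q := Real.rpow_pos_of_pos hmpos _
    have hm' : ‖binomCoef α (n + N₀)‖ * ((n + N₀ : ℕ) : ℝ) ^ q ≤ u N₀ := by
      have h := hmono n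
      simp only [hu] at h ⊢
      rwa [Nat.add_comm N₀ n] at h
    rw [Real.rpow_neg hmpos.le, ← div_eq_mul_inv, le_div_iff₀ hqpos]
    exact hm'
  rw [← summable_nat_add_iff N₀]
  have hs : Summable (fun n : ℕ => ((n : ℕ) : ℝ) ^ (-q)) :=
    Real.summable_nat_rpow.mpr (by linarith)
  have hs2 := (summable_nat_add_iff (f := fun n : ℕ => ((n : ℕ) : ℝ) ^ (-q)) N₀).mpr hs
  exact Summable.of_nonneg_of_le (fun n => norm_nonneg _) hbound (hs2.mul_left (u N₀))

lemma pochNewton_nat_eq (n k : ℕ) (hk : k ≤ n) :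
    pochNewton k (n : ℂ) = (-1 : ℂ) ^ k * (n.choose k : ℂ) := by
  have hprod : (∏ m ∈ Finset.range k, ((n : ℂ) - (m : ℂ))) = (n.descFactorial k : ℂ) := by
    rw [Nat.descFactorial_eq_prod_range, Nat.cast_prod]
    refine Finset.prod_congr rfl fun i hi => ?_
    rw [Nat.cast_sub (le_trans (Nat.le_of_lt_succ (Nat.lt_succ_of_lt (Finset.mem_range.mp hi))) hk)]
  rw [pochNewton, hprod, Nat.descFactorial_eq_factorial_mul_choose, Nat.cast_mul]
  have hkf : ((k.factorial : ℂ)) ≠ 0 := Nat.cast_ne_zero.mpr k.factorial_ne_zero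
  field_simp

lemma one_sub_pow_eq (n : ℕ) (z : ℂ) :
    (1 - z) ^ n = ∑ k ∈ Finset.range (n + 1), pochNewton k (n : ℂ) * z ^ k := by
  have h : (1 - z) ^ n = (-z + 1) ^ n := by ring_nf
  rw [h, add_pow]
  refine Finset.sum_congr rfl fun k hk => ?_
  rw [pochNewton_nat_eq n k (Nat.le_of_lt_succ (Finset.mem_range.mp hk)), neg_pow, one_pow]
  ring

lemma pochNewton_mul_one_sub (α : ℂ) (n : ℕ) (z : ℂ) :
    pochNewton n α * (1 - z) ^ n = binomCoef α n * (z - 1) ^ n := by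
  rw [show (1 : ℂ) - z = -(z - 1) from by ring, neg_pow, pochNewton, binomCoef]
  have h3 : ((-1 : ℂ)) ^ n * (-1) ^ n = 1 := by rw [← mul_pow]; norm_num
  calc ((-1 : ℂ) ^ n / (n.factorial : ℂ)) * (∏ m ∈ Finset.range n, (α - (m : ℂ)))
        * ((-1) ^ n * (z - 1) ^ n)
      = ((-1 : ℂ) ^ n * (-1) ^ n) * (((∏ m ∈ Finset.range n, (α - (m : ℂ))) / (n.factorial : ℂ))
        * (z - 1) ^ n) := by ring
    _ = _ := by rw [h3, one_mul]

/-- For a star-normal element `a` of a unital C*-algebra whose spectrum lies in the closed disc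
`\overline{B(1,1)}`, and `Re α > 0`, the Newton series
`∑_{n} (∑_{k=0}^n P_k(n) a^k) P_n(α)` converges in norm to `cfc f a`, where `f` is the
principal power `z ↦ z^α` extended by `f 0 = 0`. -/
theorem newton_series_cfc_cpow_closed {A : Type*} [CStarAlgebra A] (a : A)
    (ha : IsStarNormal a) (hspec : spectrum ℂ a ⊆ Metric.closedBall (1 : ℂ) 1)
    (α : ℂ) (hα : 0 < α.re) :
    Tendsto (fun N : ℕ => ∑ n ∈ Finset.range N,
        pochNewton n α • ∑ k ∈ Finset.range (n + 1), pochNewton k (n : ℂ) • a ^ k)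
      atTop (𝓝 (cfc (fun z : ℂ => if z = 0 then 0 else z ^ α) a)) := by
  haveI := ha
  have hα0 : α ≠ 0 := fun h => by simp [h] at hα
  have hf_eq : (fun z : ℂ => if z = 0 then 0 else z ^ α) = fun z : ℂ => z ^ α := by
    funext z
    split_ifs with h
    · rw [h, Complex.zero_cpow hα0]
    · rfl
  rw [hf_eq]
  have hcf : ContinuousOn (fun z : ℂ => z ^ α) (Metric.closedBall (1 : ℂ) 1) :=
    fun z hz => (Complex.continuousAt_cpow_const_of_re_pos
      (Or.inl (re_nonneg_of_mem_closedBall hz)) hα).continuousWithinAt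
  have hcf' : ContinuousOn (fun z : ℂ => z ^ α) (spectrum ℂ a) := hcf.mono hspec
  have hU : TendstoUniformlyOn
      (fun N => fun z : ℂ => ∑ n ∈ Finset.range N, binomCoef α n * (z - 1) ^ n)
      (fun z : ℂ => ∑' n : ℕ, binomCoef α n * (z - 1) ^ n) atTop (Metric.closedBall (1 : ℂ) 1) :=
    tendstoUniformlyOn_tsum_nat (summable_binomCoef hα) (fun n z hz => by
      rw [norm_mul, norm_pow]
      have hz1 : ‖z - 1‖ ≤ 1 := by rwa [Metric.mem_closedBall, dist_eq_norm] at hz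
      calc ‖binomCoef α n‖ * ‖z - 1‖ ^ n ≤ ‖binomCoef α n‖ * 1 :=
            mul_le_mul_of_nonneg_left (pow_le_one₀ (norm_nonneg _) hz1) (norm_nonneg _)
        _ = ‖binomCoef α n‖ := mul_one _)
  have hcont_g : ContinuousOn (fun z : ℂ => ∑' n : ℕ, binomCoef α n * (z - 1) ^ n)
      (Metric.closedBall (1 : ℂ) 1) :=
    hU.continuousOn (Filter.Frequently.of_forall fun N =>
      (continuous_finset_sum _ fun i _ => by fun_prop).continuousOn)
  have hEq : Set.EqOn (fun z : ℂ => ∑' n : ℕ, binomCoef α n * (z - 1) ^ n)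
      (fun z : ℂ => z ^ α) (Metric.closedBall (1 : ℂ) 1) := by
    have hball : Set.EqOn (fun z : ℂ => ∑' n : ℕ, binomCoef α n * (z - 1) ^ n)
        (fun z : ℂ => z ^ α) (Metric.ball (1 : ℂ) 1) :=
      fun z hz => (hasSum_binomial α hz).tsum_eq
    exact hball.of_subset_closure hcont_g hcf Metric.ball_subset_closedBall
      (by rw [closure_ball (1 : ℂ) one_ne_zero])
  have hPS : ∀ N : ℕ, (∑ n ∈ Finset.range N,
      pochNewton n α • ∑ k ∈ Finset.range (n + 1), pochNewton k (n : ℂ) • a ^ k)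
      = cfc (fun z : ℂ => ∑ n ∈ Finset.range N, binomCoef α n * (z - 1) ^ n) a := by
    intro N
    have hinner : ∀ n : ℕ, (∑ k ∈ Finset.range (n + 1), pochNewton k (n : ℂ) • a ^ k)
        = cfc (fun z : ℂ => (1 - z) ^ n) a := by
      intro n
      have h1 : (fun z : ℂ => (1 - z) ^ n)
          = ∑ k ∈ Finset.range (n + 1), (fun z : ℂ => pochNewton k (n : ℂ) * z ^ k) := by
        funext z
        rw [one_sub_pow_eq]
        simp
      rw [h1, cfc_sum _ a _ (fun i _ => by fun_prop)]
      refine (Finset.sum_congr rfl fun k _ => ?_).symm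
      rw [cfc_const_mul _ _ a (by fun_prop), cfc_pow_id a k]
    have hfun : (fun z : ℂ => ∑ n ∈ Finset.range N, binomCoef α n * (z - 1) ^ n)
        = ∑ n ∈ Finset.range N, (fun z : ℂ => pochNewton n α * (1 - z) ^ n) := by
      funext z
      rw [Finset.sum_apply]
      exact (Finset.sum_congr rfl fun n _ => pochNewton_mul_one_sub α n z).symm
    rw [hfun, cfc_sum _ a _ (fun i _ => by fun_prop)]
    refine Finset.sum_congr rfl fun n _ => ?_
    rw [cfc_const_mul _ _ a (by fun_prop), hinner n]
  simp only [hPS]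
  rw [Metric.tendsto_atTop]
  intro ε hε
  have hU' := Metric.tendstoUniformlyOn_iff.mp hU (ε / 2) (by positivity)
  rw [Filter.eventually_atTop] at hU'
  obtain ⟨N₀, hN₀⟩ := hU'
  refine ⟨N₀, fun N hN => ?_⟩
  rw [dist_eq_norm]
  have hsub : cfc (fun z : ℂ => ∑ n ∈ Finset.range N, binomCoef α n * (z - 1) ^ n) a
      - cfc (fun z : ℂ => z ^ α) a
      = cfc (fun z : ℂ => (∑ n ∈ Finset.range N, binomCoef α n * (z - 1) ^ n) - z ^ α) a :=
    (cfc_sub _ _ a (by fun_prop) hcf').symm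
  rw [hsub]
  refine lt_of_le_of_lt (norm_cfc_le (c := ε / 2) (by positivity) fun x hx => ?_) (by linarith)
  have hx' := hspec hx
  have hdist := hN₀ N hN x hx'
  rw [dist_eq_norm] at hdist
  have hgx : (∑' n : ℕ, binomCoef α n * (x - 1) ^ n) = x ^ α := hEq hx'
  rw [hgx] at hdist
  calc ‖(∑ n ∈ Finset.range N, binomCoef α n * (x - 1) ^ n) - x ^ α‖
      = ‖x ^ α - ∑ n ∈ Finset.range N, binomCoef α n * (x - 1) ^ n‖ := norm_sub_rev _ _
    _ ≤ ε / 2 := le_of_lt hdist
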